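/- The iterated integral ∫₀¹ ∫₀^{1−x} 1/((x+y)(1−x)(1−y)) dy dx equals π²/4. -/

import Mathlib

open Real MeasureTheory Set intervalIntegral

private lemma aux_deriv (k : ℕ) (x : ℝ) (hx : x ∈ Ioo (0:ℝ) 1) :
    HasDerivAt (fun x : ℝ => x ^ (k+1) / ((k:ℝ)+1) ^ 2 - x ^ k * (x * Real.log x) / ((k:ℝ)+1))
      (-Real.log x * x ^ k) x := by
  have hx0 : x ≠ 0 := ne_of_gt hx.1
  have h1 : HasDerivAt (fun x : ℝ => x ^ (k+1)) (((k:ℝ)+1) * x ^ k) x := by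
    simpa using hasDerivAt_pow (k+1) x
  have h2 : HasDerivAt (fun x : ℝ => x ^ (k+1) * Real.log x)
      (((k:ℝ)+1) * x ^ k * Real.log x + x ^ (k+1) * x⁻¹) x :=
    h1.mul (Real.hasDerivAt_log hx0)
  have heq : (fun x : ℝ => x ^ (k+1) / ((k:ℝ)+1) ^ 2 - x ^ k * (x * Real.log x) / ((k:ℝ)+1))
      = fun x : ℝ => x ^ (k+1) / ((k:ℝ)+1) ^ 2 - x ^ (k+1) * Real.log x / ((k:ℝ)+1) := by
    funext y; ring
  rw [heq]
  have := (h1.div_const (((k:ℝ)+1) ^ 2)).sub (h2.div_const ((k:ℝ)+1))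
  refine this.congr_deriv ?_
  have hk : ((k:ℝ)+1) ≠ 0 := by positivity
  field_simp
  ring

private lemma aux_cont (k : ℕ) :
    Continuous (fun x : ℝ => x ^ (k+1) / ((k:ℝ)+1) ^ 2 - x ^ k * (x * Real.log x) / ((k:ℝ)+1)) := by
  exact ((continuous_pow (k+1)).div_const _).sub
    (((continuous_pow k).mul Real.continuous_mul_log).div_const _)

private lemma aux_nonneg (k : ℕ) (x : ℝ) (hx : x ∈ Ioo (0:ℝ) 1) : 0 ≤ -Real.log x * x ^ k := by
  have h1 : Real.log x ≤ 0 := Real.log_nonpos hx.1.le hx.2.le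
  have h2 : (0:ℝ) ≤ x ^ k := pow_nonneg hx.1.le k
  nlinarith

private lemma aux_integrable (k : ℕ) :
    IntegrableOn (fun x : ℝ => -Real.log x * x ^ k) (Ioc (0:ℝ) 1) := by
  exact integrableOn_deriv_of_nonneg (aux_cont k).continuousOn
    (fun x hx => aux_deriv k x hx) (fun x hx => aux_nonneg k x hx)

private lemma aux_integral (k : ℕ) :
    ∫ x in Ioc (0:ℝ) 1, -Real.log x * x ^ k = 1 / ((k:ℝ)+1) ^ 2 := by
  have h := integral_eq_sub_of_hasDeriv_right_of_le (a := (0:ℝ)) (b := 1) zero_le_one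
    (aux_cont k).continuousOn
    (fun x hx => (aux_deriv k x hx).hasDerivWithinAt)
    (by
      rw [intervalIntegrable_iff_integrableOn_Ioc_of_le zero_le_one]
      exact aux_integrable k)
  rw [intervalIntegral.integral_of_le zero_le_one] at h
  rw [h]
  norm_num

private lemma aux_odd_sum : HasSum (fun n : ℕ => (2:ℝ) / (2*(n:ℝ)+1) ^ 2) (π ^ 2 / 4) := by
  have h := hasSum_zeta_two
  have heven : HasSum (fun n : ℕ => (1:ℝ) / ((2*n : ℕ) : ℝ) ^ 2) (π ^ 2 / 24) := by
    have h2 := h.mul_left (1/4)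
    have hfe : (fun n : ℕ => (1:ℝ) / ((2*n : ℕ) : ℝ) ^ 2)
        = fun n : ℕ => 1/4 * ((1:ℝ) / (n:ℝ) ^ 2) := by
      funext n; push_cast; ring
    rw [hfe]
    rw [show π ^ 2 / 24 = 1/4 * (π ^ 2 / 6) by ring]
    exact h2
  have hsummable : Summable (fun n : ℕ => (1:ℝ) / ((2*n+1 : ℕ) : ℝ) ^ 2) :=
    h.summable.comp_injective (fun a b hab => by omega)
  have hc' := hsummable.hasSum
  have htot := HasSum.even_add_odd (f := fun n : ℕ => (1:ℝ) / (n:ℝ) ^ 2) heven hc'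
  have huniq : π ^ 2 / 24 + (∑' n : ℕ, (1:ℝ) / ((2*n+1 : ℕ) : ℝ) ^ 2) = π ^ 2 / 6 := htot.unique h
  have hcval : (∑' n : ℕ, (1:ℝ) / ((2*n+1 : ℕ) : ℝ) ^ 2) = π ^ 2 / 8 := by linarith
  rw [hcval] at hc'
  have h3 := hc'.mul_left 2
  have hfe2 : (fun n : ℕ => (2:ℝ) / (2*(n:ℝ)+1) ^ 2)
      = fun n : ℕ => 2 * ((1:ℝ) / ((2*n+1 : ℕ) : ℝ) ^ 2) := by
    funext n; push_cast; ring
  rw [hfe2]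
  rw [show π ^ 2 / 4 = 2 * (π ^ 2 / 8) by ring]
  exact h3

private lemma aux_inner (x : ℝ) (hx : x ∈ Ioo (0:ℝ) 1) :
    ∫ y in (0:ℝ)..(1 - x), 1 / ((x + y) * (1 - x) * (1 - y))
      = (-2 * Real.log x) / ((1 - x) * (1 + x)) := by
  obtain ⟨hx0, hx1⟩ := hx
  have hle : (0:ℝ) ≤ 1 - x := by linarith
  set c : ℝ := 1 / ((1 - x) * (1 + x)) with hc
  have hderiv : ∀ y ∈ uIcc (0:ℝ) (1 - x),
      HasDerivAt (fun y => c * (Real.log (x + y) - Real.log (1 - y)))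
        (c * (1/(x+y) - (-1)/(1-y))) y := by
    intro y hy
    rw [uIcc_of_le hle] at hy
    have hxy : x + y ≠ 0 := by have := hy.1; positivity
    have h1y : 1 - y ≠ 0 := by have := hy.2; nlinarith [hy.1]
    have h1 : HasDerivAt (fun y : ℝ => x + y) 1 y := by
      simpa using (hasDerivAt_id y).const_add x
    have h2 : HasDerivAt (fun y : ℝ => 1 - y) (-1) y := by
      simpa using (hasDerivAt_id y).const_sub 1
    exact ((h1.log hxy).sub (h2.log h1y)).const_mul c
  have hcont : ContinuousOn (fun y : ℝ => c * (1/(x+y) - (-1)/(1-y))) (uIcc (0:ℝ) (1 - x)) := by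
    rw [uIcc_of_le hle]
    apply continuousOn_const.mul
    apply ContinuousOn.sub
    · exact continuousOn_const.div (by fun_prop) (fun y hy => by have := hy.1; positivity)
    · exact continuousOn_const.div (by fun_prop) (fun y hy => by nlinarith [hy.1, hy.2])
  have hint : IntervalIntegrable (fun y : ℝ => c * (1/(x+y) - (-1)/(1-y))) volume 0 (1-x) :=
    hcont.intervalIntegrable
  have heq : ∫ y in (0:ℝ)..(1 - x), 1 / ((x + y) * (1 - x) * (1 - y))
      = ∫ y in (0:ℝ)..(1 - x), c * (1/(x+y) - (-1)/(1-y)) := by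
    apply intervalIntegral.integral_congr
    intro y hy
    rw [uIcc_of_le hle] at hy
    have hxy : 0 < x + y := by have := hy.1; positivity
    have h1y : 0 < 1 - y := by nlinarith [hy.1, hy.2]
    have h1x : 0 < 1 - x := by linarith
    have h1x' : 0 < 1 + x := by linarith
    rw [hc]
    field_simp
    ring
  rw [heq, intervalIntegral.integral_eq_sub_of_hasDerivAt hderiv hint]
  simp only [add_sub_cancel, sub_sub_cancel, sub_zero, add_zero, Real.log_one]
  rw [hc]
  ring

private lemma aux_gint_eq (n : ℕ) :
    (fun x : ℝ => (-2 * Real.log x) * x ^ (2*n)) = fun x => 2 * (-Real.log x * x ^ (2*n)) := by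
  funext x; ring

private lemma aux_g_integral (n : ℕ) :
    ∫ x in Ioc (0:ℝ) 1, (-2 * Real.log x) * x ^ (2*n) = 2 / (2*(n:ℝ)+1) ^ 2 := by
  rw [aux_gint_eq n, MeasureTheory.integral_const_mul, aux_integral (2*n)]
  push_cast
  ring

private lemma aux_g_integrable (n : ℕ) :
    Integrable (fun x : ℝ => (-2 * Real.log x) * x ^ (2*n)) (volume.restrict (Ioc (0:ℝ) 1)) := by
  rw [aux_gint_eq n]
  exact (aux_integrable (2*n)).const_mul 2

/-- The total mass of the invariant density of the Reverse algorithm: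
`∫₀¹ ∫₀^{1-x} 1/((x+y)(1-x)(1-y)) dy dx = π²/4`. -/
theorem stmt_8 :
    (∫ x in (0:ℝ)..1, ∫ y in (0:ℝ)..(1 - x), 1 / ((x + y) * (1 - x) * (1 - y))) =
      Real.pi ^ 2 / 4 := by
  rw [intervalIntegral.integral_of_le zero_le_one]
  have hkey : ∀ x ∈ Ioc (0:ℝ) 1,
      (∫ y in (0:ℝ)..(1 - x), 1 / ((x + y) * (1 - x) * (1 - y)))
        = ∑' n : ℕ, (-2 * Real.log x) * x ^ (2*n) := by
    intro x hx
    rcases eq_or_lt_of_le hx.2 with h1 | h1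
    · subst h1
      simp [Real.log_one]
    · have hx' : x ∈ Ioo (0:ℝ) 1 := ⟨hx.1, h1⟩
      rw [aux_inner x hx']
      have hsq0 : (0:ℝ) ≤ x^2 := sq_nonneg x
      have hsq1 : x^2 < 1 := by nlinarith [hx.1, h1]
      have hpow : ∀ n : ℕ, (-2 * Real.log x) * x ^ (2*n)
          = (-2 * Real.log x) * (x^2) ^ n := by
        intro n; rw [← pow_mul]
      calc (-2 * Real.log x) / ((1 - x) * (1 + x))
          = (-2 * Real.log x) * (1 - x^2)⁻¹ := by
            rw [div_eq_mul_inv]; ring_nf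
        _ = ∑' n : ℕ, (-2 * Real.log x) * (x^2) ^ n := by
            rw [tsum_mul_left, tsum_geometric_of_lt_one hsq0 hsq1]
        _ = ∑' n : ℕ, (-2 * Real.log x) * x ^ (2*n) := by
            exact tsum_congr fun n => (hpow n).symm
  rw [setIntegral_congr_fun measurableSet_Ioc hkey]
  have hswap := integral_tsum_of_summable_integral_norm
    (μ := volume.restrict (Ioc (0:ℝ) 1))
    (F := fun (n : ℕ) (x : ℝ) => (-2 * Real.log x) * x ^ (2*n))
    (fun n => aux_g_integrable n)
    (by
      have hnorm : ∀ n : ℕ, (∫ x in Ioc (0:ℝ) 1, ‖(-2 * Real.log x) * x ^ (2*n)‖)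
          = 2 / (2*(n:ℝ)+1) ^ 2 := by
        intro n
        rw [← aux_g_integral n]
        apply setIntegral_congr_fun measurableSet_Ioc
        intro x hx
        rcases eq_or_lt_of_le hx.2 with h1 | h1
        · subst h1; simp [Real.log_one]
        · have h0 : 0 ≤ (-2 * Real.log x) * x ^ (2*n) := by
            have := aux_nonneg (2*n) x ⟨hx.1, h1⟩
            nlinarith
          exact Real.norm_of_nonneg h0
      simp only [hnorm]
      exact aux_odd_sum.summable)
  rw [← hswap]
  have hval : ∀ n : ℕ, (∫ x in Ioc (0:ℝ) 1, (-2 * Real.log x) * x ^ (2*n)) = 2 / (2*(n:ℝ)+1) ^ 2 :=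
    aux_g_integral
  simp only [hval]
  exact aux_odd_sum.tsum_eq
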